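/- arXiv:1008.1970 — 6 statements merged into one kernel-verified Lean document; each statement's English description precedes it below -/
import Mathlib

section
/- Variational characterization of Rényi entropy: for any PMF P on a finite set X and any θ > 0, sup over PMFs Q of { θ H(Q) − D(Q‖P) } = θ H_{1/(1+θ)}(P), where H_α(P) = (1/(1−α)) ln ∑_x P(x)^α is the Rényi entropy of order α and H is Shannon entropy. -/
open Real Finset

lemma gibbs_aux {X : Type*} [Fintype X] [Nonempty X] (a Q : X → ℝ)
    (ha : ∀ x, 0 < a x) (hQ0 : ∀ x, 0 ≤ Q x) (hQ1 : ∑ x : X, Q x = 1) :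
    ∑ x : X, (Q x * Real.log (a x) - Q x * Real.log (Q x))
      ≤ Real.log (∑ x : X, a x) := by
  set S := ∑ x : X, a x with hS
  have hSpos : 0 < S := Finset.sum_pos (fun x _ => ha x) Finset.univ_nonempty
  have key : ∀ x : X, Q x * Real.log (a x) - Q x * Real.log (Q x)
      ≤ a x / S - Q x + Q x * Real.log S := by
    intro x
    rcases eq_or_lt_of_le (hQ0 x) with h | h
    · rw [← h]
      have := div_pos (ha x) hSpos
      nlinarith
    · have h1 : 0 < a x / (Q x * S) := div_pos (ha x) (mul_pos h hSpos)
      have h2 := Real.log_le_sub_one_of_pos h1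
      rw [Real.log_div (ne_of_gt (ha x)) (by positivity),
        Real.log_mul (ne_of_gt h) (ne_of_gt hSpos)] at h2
      have h3 : Q x * (Real.log (a x) - (Real.log (Q x) + Real.log S))
          ≤ Q x * (a x / (Q x * S) - 1) :=
        mul_le_mul_of_nonneg_left h2 (le_of_lt h)
      have h4 : Q x * (a x / (Q x * S)) = a x / S := by
        field_simp
      nlinarith [h3, h4]
  calc ∑ x : X, (Q x * Real.log (a x) - Q x * Real.log (Q x))
      ≤ ∑ x : X, (a x / S - Q x + Q x * Real.log S) :=
        Finset.sum_le_sum (fun x _ => key x)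
    _ = Real.log S := by
        rw [Finset.sum_add_distrib, Finset.sum_sub_distrib, ← Finset.sum_div,
          ← Finset.sum_mul, hQ1, ← hS]
        field_simp
        ring

/-- Variational characterization of Rényi entropy: for any full-support PMF `P`
on a finite set `X` and any `θ > 0`,
`sup_Q { θ H(Q) − D(Q‖P) } = θ H_{1/(1+θ)}(P)`, where
`H_α(P) = (1/(1−α)) ln ∑_x P(x)^α` and `H` is Shannon entropy (natural log). -/
theorem stmt5 {X : Type*} [Fintype X] [Nonempty X]
    (P : X → ℝ) (hP0 : ∀ x, 0 < P x) (hP1 : ∑ x : X, P x = 1)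
    (θ : ℝ) (hθ : 0 < θ) :
    sSup {v : ℝ | ∃ Q : X → ℝ, (∀ x, 0 ≤ Q x) ∧ (∑ x : X, Q x = 1) ∧
        v = θ * (∑ x : X, -(Q x * Real.log (Q x)))
            - ∑ x : X, Q x * Real.log (Q x / P x)} =
      θ * ((1 - 1 / (1 + θ))⁻¹ *
        Real.log (∑ x : X, P x ^ (1 / (1 + θ)))) := by
  have hθ1 : (0:ℝ) < 1 + θ := by linarith
  set α : ℝ := 1 / (1 + θ) with hα
  set a : X → ℝ := fun x => P x ^ α with ha
  have hax : ∀ x, 0 < a x := fun x => Real.rpow_pos_of_pos (hP0 x) _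
  set Z : ℝ := ∑ x : X, a x with hZ
  have hZpos : 0 < Z := Finset.sum_pos (fun x _ => hax x) Finset.univ_nonempty
  have hloga : ∀ x, Real.log (a x) = α * Real.log (P x) := fun x =>
    Real.log_rpow (hP0 x) _
  -- rewrite the objective as (1+θ) * ∑ (Q log a − Q log Q)
  have hv : ∀ Q : X → ℝ, (∀ x, 0 ≤ Q x) →
      θ * (∑ x : X, -(Q x * Real.log (Q x)))
          - ∑ x : X, Q x * Real.log (Q x / P x)
        = (1 + θ) * ∑ x : X, (Q x * Real.log (a x) - Q x * Real.log (Q x)) := by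
    intro Q hQ0
    rw [Finset.mul_sum, Finset.mul_sum, ← Finset.sum_sub_distrib]
    apply Finset.sum_congr rfl
    intro x _
    rcases eq_or_lt_of_le (hQ0 x) with h | h
    · rw [← h]; ring_nf
    · rw [Real.log_div (ne_of_gt h) (ne_of_gt (hP0 x)), hloga x, hα]
      field_simp
      ring
  -- the target value
  have hT : θ * ((1 - α)⁻¹ * Real.log Z) = (1 + θ) * Real.log Z := by
    have h1 : 1 - α = θ / (1 + θ) := by rw [hα]; field_simp; ring
    rw [h1]
    field_simp
  apply IsGreatest.csSup_eq
  constructor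
  · -- membership: Q* = a / Z
    refine ⟨fun x => a x / Z, fun x => le_of_lt (div_pos (hax x) hZpos), ?_, ?_⟩
    · rw [← Finset.sum_div, ← hZ, div_self (ne_of_gt hZpos)]
    · rw [hv _ (fun x => le_of_lt (div_pos (hax x) hZpos)), hT]
      congr 1
      have : ∀ x : X, a x / Z * Real.log (a x) - a x / Z * Real.log (a x / Z)
          = a x / Z * Real.log Z := by
        intro x
        rw [Real.log_div (ne_of_gt (hax x)) (ne_of_gt hZpos)]
        ring
      rw [Finset.sum_congr rfl (fun x _ => this x), ← Finset.sum_mul,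
        ← Finset.sum_div, ← hZ, div_self (ne_of_gt hZpos), one_mul]
  · rintro v ⟨Q, hQ0, hQ1, rfl⟩
    rw [hv Q hQ0, hT]
    exact mul_le_mul_of_nonneg_left (gibbs_aux a Q hax hQ0 hQ1) (le_of_lt hθ1)
end

section
/- For any ρ > 0, any PMF μ on a finite set X, and any nonempty subset B ⊆ X with μ(B) > 0, (1+ρ) ln ∑_{x∈B} μ(x)^{1/(1+ρ)} = max over PMFs ν supported on B of { ρ H(ν) − D(ν‖μ) }, and the maximum is attained by ν*(x) = μ(x)^{1/(1+ρ)} / ∑_{y∈B} μ(y)^{1/(1+ρ)} for x ∈ B. -/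
open Real Finset

/-- Gibbs' inequality. -/
lemma gibbs_aux_s6 {X : Type*} (s : Finset X) (ν q : X → ℝ)
    (hν : ∀ x ∈ s, 0 ≤ ν x) (hq : ∀ x ∈ s, 0 ≤ q x)
    (habs : ∀ x ∈ s, q x = 0 → ν x = 0)
    (hsum : ∑ x ∈ s, ν x = ∑ x ∈ s, q x) :
    0 ≤ ∑ x ∈ s, ν x * Real.log (ν x / q x) := by
  have key : ∀ x ∈ s, ν x * Real.log (q x / ν x) ≤ q x - ν x := by
    intro x hx
    rcases eq_or_lt_of_le (hν x hx) with h0 | h0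
    · simp [← h0, hq x hx]
    · have hqpos : 0 < q x := by
        rcases eq_or_lt_of_le (hq x hx) with h | h
        · exact absurd (habs x hx h.symm) (by positivity)
        · exact h
      have hlog : Real.log (q x / ν x) ≤ q x / ν x - 1 :=
        Real.log_le_sub_one_of_pos (by positivity)
      calc ν x * Real.log (q x / ν x) ≤ ν x * (q x / ν x - 1) :=
            mul_le_mul_of_nonneg_left hlog h0.le
        _ = q x - ν x := by field_simp
  have h1 : ∑ x ∈ s, ν x * Real.log (q x / ν x) ≤ 0 := by
    calc ∑ x ∈ s, ν x * Real.log (q x / ν x) ≤ ∑ x ∈ s, (q x - ν x) :=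
          Finset.sum_le_sum key
      _ = 0 := by rw [Finset.sum_sub_distrib, hsum, sub_self]
  have h2 : ∑ x ∈ s, ν x * Real.log (ν x / q x)
      = -∑ x ∈ s, ν x * Real.log (q x / ν x) := by
    rw [← Finset.sum_neg_distrib]
    refine Finset.sum_congr rfl fun x hx => ?_
    rcases eq_or_lt_of_le (hν x hx) with h0 | h0
    · simp [← h0]
    · have hqpos : 0 < q x := by
        rcases eq_or_lt_of_le (hq x hx) with h | h
        · exact absurd (habs x hx h.symm) (by positivity)
        · exact h
      rw [Real.log_div h0.ne' hqpos.ne', Real.log_div hqpos.ne' h0.ne']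
      ring
  rw [h2]; linarith

/-- For any `ρ > 0`, any PMF `μ` on a finite set `X`, and any nonempty subset
`B ⊆ X` with `μ(B) > 0`,
`(1+ρ) ln ∑_{x∈B} μ(x)^{1/(1+ρ)} = max_{ν ∈ M(B)} { ρ H(ν) − D(ν‖μ) }`
(the max over PMFs `ν` supported on `B` and absolutely continuous w.r.t. `μ`;
non-absolutely-continuous `ν` have `D(ν‖μ) = +∞` and do not contribute), and
the maximum is attained by
`ν*(x) = μ(x)^{1/(1+ρ)} / ∑_{y∈B} μ(y)^{1/(1+ρ)}` for `x ∈ B`. -/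
theorem stmt6 {X : Type*} [Fintype X] [DecidableEq X] (ρ : ℝ) (hρ : 0 < ρ)
    (μ : X → ℝ) (hμ0 : ∀ x, 0 ≤ μ x) (hμ1 : ∑ x : X, μ x = 1)
    (B : Finset X) (hB : B.Nonempty) (hμB : 0 < ∑ x ∈ B, μ x)
    (ν' : X → ℝ)
    (hν' : ∀ x, ν' x = if x ∈ B then
        μ x ^ (1 / (1 + ρ)) / ∑ y ∈ B, μ y ^ (1 / (1 + ρ)) else 0) :
    IsGreatest
      {v : ℝ | ∃ ν : X → ℝ, (∀ x, 0 ≤ ν x) ∧ (∑ x ∈ B, ν x = 1) ∧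
        (∀ x, x ∉ B → ν x = 0) ∧ (∀ x, μ x = 0 → ν x = 0) ∧
        v = ρ * (∑ x : X, -(ν x * Real.log (ν x)))
            - ∑ x : X, ν x * Real.log (ν x / μ x)}
      ((1 + ρ) * Real.log (∑ x ∈ B, μ x ^ (1 / (1 + ρ)))) ∧
    ρ * (∑ x : X, -(ν' x * Real.log (ν' x)))
        - (∑ x : X, ν' x * Real.log (ν' x / μ x)) =
      (1 + ρ) * Real.log (∑ x ∈ B, μ x ^ (1 / (1 + ρ))) := by
  set α : ℝ := 1 / (1 + ρ) with hα
  have h1ρ : (0:ℝ) < 1 + ρ := by linarith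
  have hαpos : 0 < α := by positivity
  have hαmul : (1 + ρ) * α = 1 := by rw [hα]; field_simp
  set Z : ℝ := ∑ y ∈ B, μ y ^ α with hZ
  -- Z > 0
  have hZpos : 0 < Z := by
    obtain ⟨x, hxB, hxpos⟩ : ∃ x ∈ B, 0 < μ x := by
      by_contra h
      push_neg at h
      have : ∑ x ∈ B, μ x ≤ 0 := Finset.sum_nonpos (fun x hx => h x hx)
      linarith
    refine Finset.sum_pos' (fun y _ => Real.rpow_nonneg (hμ0 y) α) ⟨x, hxB, ?_⟩
    exact Real.rpow_pos_of_pos hxpos α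
  -- basic properties of ν'
  have hν'0 : ∀ x, 0 ≤ ν' x := by
    intro x; rw [hν' x]
    split
    · exact div_nonneg (Real.rpow_nonneg (hμ0 x) α) hZpos.le
    · exact le_rfl
  have hν'supp : ∀ x, x ∉ B → ν' x = 0 := by
    intro x hx; rw [hν' x, if_neg hx]
  have hν'sum : ∑ x ∈ B, ν' x = 1 := by
    have : ∑ x ∈ B, ν' x = ∑ x ∈ B, μ x ^ α / Z :=
      Finset.sum_congr rfl fun x hx => by rw [hν' x, if_pos hx]
    rw [this, ← Finset.sum_div, ← hZ, div_self hZpos.ne']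
  have hν'abs : ∀ x, μ x = 0 → ν' x = 0 := by
    intro x hx; rw [hν' x]
    split
    · rw [hx, Real.zero_rpow hαpos.ne', zero_div]
    · rfl
  -- objective rewrite for any feasible ν
  have hobj : ∀ ν : X → ℝ, (∀ x, 0 ≤ ν x) → (∀ x, x ∉ B → ν x = 0) →
      (∀ x, μ x = 0 → ν x = 0) →
      ρ * (∑ x : X, -(ν x * Real.log (ν x))) - ∑ x : X, ν x * Real.log (ν x / μ x)
        = -(1 + ρ) * ∑ x ∈ B, ν x * Real.log (ν x / μ x ^ α) := by
    intro ν hn0 hns hna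
    have e1 : ∑ x : X, -(ν x * Real.log (ν x)) = ∑ x ∈ B, -(ν x * Real.log (ν x)) := by
      refine (Finset.sum_subset (Finset.subset_univ B) ?_).symm
      intro x _ hx; rw [hns x hx]; simp
    have e2 : ∑ x : X, ν x * Real.log (ν x / μ x)
        = ∑ x ∈ B, ν x * Real.log (ν x / μ x) := by
      refine (Finset.sum_subset (Finset.subset_univ B) ?_).symm
      intro x _ hx; rw [hns x hx]; ring
    rw [e1, e2, Finset.mul_sum, ← Finset.sum_sub_distrib, Finset.mul_sum]
    refine Finset.sum_congr rfl fun x hx => ?_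
    rcases eq_or_lt_of_le (hn0 x) with h0 | h0
    · rw [← h0]; simp
    · have hμpos : 0 < μ x := by
        rcases eq_or_lt_of_le (hμ0 x) with h | h
        · exact absurd (hna x h.symm) (by positivity)
        · exact h
      rw [Real.log_div h0.ne' hμpos.ne',
        Real.log_div h0.ne' (Real.rpow_pos_of_pos hμpos α).ne',
        Real.log_rpow hμpos]
      linear_combination (-(ν x * Real.log (μ x))) * hαmul
  -- value of the inner sum at ν'
  have hval : ∑ x ∈ B, ν' x * Real.log (ν' x / μ x ^ α) = -Real.log Z := by
    have : ∀ x ∈ B, ν' x * Real.log (ν' x / μ x ^ α) = ν' x * (-Real.log Z) := by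
      intro x hx
      rcases eq_or_lt_of_le (hμ0 x) with h | h
      · rw [hν'abs x h.symm]; ring
      · have hμα : 0 < μ x ^ α := Real.rpow_pos_of_pos h α
        have : ν' x / μ x ^ α = Z⁻¹ := by
          rw [hν' x, if_pos hx]; field_simp
        rw [this, Real.log_inv]
    rw [Finset.sum_congr rfl this, ← Finset.sum_mul, hν'sum, one_mul]
  -- lower bound on the inner sum for any feasible ν
  have hbound : ∀ ν : X → ℝ, (∀ x, 0 ≤ ν x) → (∑ x ∈ B, ν x = 1) →
      (∀ x, μ x = 0 → ν x = 0) →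
      -Real.log Z ≤ ∑ x ∈ B, ν x * Real.log (ν x / μ x ^ α) := by
    intro ν hn0 hnsum hna
    have hdec : ∀ x ∈ B, ν x * Real.log (ν x / μ x ^ α)
        = ν x * Real.log (ν x / ν' x) - ν x * Real.log Z := by
      intro x hx
      rcases eq_or_lt_of_le (hn0 x) with h0 | h0
      · rw [← h0]; simp
      · have hμpos : 0 < μ x := by
          rcases eq_or_lt_of_le (hμ0 x) with h | h
          · exact absurd (hna x h.symm) (by positivity)
          · exact h
        have hμα : 0 < μ x ^ α := Real.rpow_pos_of_pos hμpos α
        have hν'x : ν' x = μ x ^ α / Z := by rw [hν' x, if_pos hx]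
        have hν'pos : 0 < ν' x := by rw [hν'x]; positivity
        rw [Real.log_div h0.ne' hμα.ne', Real.log_div h0.ne' hν'pos.ne', hν'x,
          Real.log_div hμα.ne' hZpos.ne']
        ring
    rw [Finset.sum_congr rfl hdec, Finset.sum_sub_distrib, ← Finset.sum_mul, hnsum,
      one_mul]
    have hgibbs : 0 ≤ ∑ x ∈ B, ν x * Real.log (ν x / ν' x) := by
      refine gibbs_aux_s6 B ν ν' (fun x _ => hn0 x) (fun x _ => hν'0 x) ?_
        (by rw [hnsum, hν'sum])
      intro x hx h0
      rw [hν' x, if_pos hx] at h0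
      have hμα0 : μ x ^ α = 0 := by
        rcases div_eq_zero_iff.mp h0 with h1 | h1
        · exact h1
        · exact absurd h1 hZpos.ne'
      exact hna x ((Real.rpow_eq_zero (hμ0 x) hαpos.ne').mp hμα0)
    linarith
  have hatν' : ρ * (∑ x : X, -(ν' x * Real.log (ν' x)))
      - (∑ x : X, ν' x * Real.log (ν' x / μ x)) = (1 + ρ) * Real.log Z := by
    rw [hobj ν' hν'0 hν'supp hν'abs, hval]; ring
  refine ⟨⟨⟨ν', hν'0, hν'sum, hν'supp, hν'abs, hatν'.symm⟩, ?_⟩, hatν'⟩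
  rintro v ⟨ν, hn0, hnsum, hns, hna, rfl⟩
  rw [hobj ν hn0 hns hna]
  have := hbound ν hn0 hnsum hna
  nlinarith [this]
end

section
/- For any PMF P on a finite set X enumerated so that P(x_1) ≥ P(x_2) ≥ ... and any ρ > 0, M ≥ 1, one has ∑_{i=1}^{|X|} P(x_i)·min{i, M}^ρ ≤ (2+ρ)·∑_{j≥0} ∑_{i=0}^{M−1} P(x_{jM+i+1})·(i+1)^ρ, i.e., the saturated-moment sum is within factor (2+ρ) of the group-wise guessing moment (where indices beyond |X| are treated as probability 0). -/
open Finset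

/-- Lower bound for sum of powers: `M^(1+ρ) ≤ (1+ρ) ∑_{i<M} (i+1)^ρ`. -/
lemma aux_sum_rpow_lb (ρ : ℝ) (hρ : 0 < ρ) (M : ℕ) :
    (M : ℝ) ^ (1 + ρ) ≤ (1 + ρ) * ∑ i ∈ Finset.range M, ((i : ℝ) + 1) ^ ρ := by
  induction M with
  | zero =>
    simp [Real.zero_rpow (by positivity : (1:ℝ)+ρ ≠ 0)]
  | succ M ih =>
    rw [Finset.sum_range_succ, mul_add]
    have hb : (0:ℝ) < (M:ℝ) + 1 := by positivity
    have key : ((M:ℝ)+1) ^ (1+ρ) ≤ (M:ℝ) ^ (1+ρ) + (1+ρ) * ((M:ℝ)+1) ^ ρ := by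
      have hs : (-1:ℝ) ≤ -(1/((M:ℝ)+1)) := by
        rw [neg_le_neg_iff]
        rw [div_le_one hb]
        linarith
      have hber := one_add_mul_self_le_rpow_one_add hs (by linarith : (1:ℝ) ≤ 1+ρ)
      have hnn : (0:ℝ) ≤ 1 + -(1/((M:ℝ)+1)) := by
        have h1 : (1:ℝ)/((M:ℝ)+1) ≤ 1 := by
          rw [div_le_one hb]; linarith
        linarith
      have hmul : ((M:ℝ)+1) ^ (1+ρ) * (1 + -(1/((M:ℝ)+1))) ^ (1+ρ) = (M:ℝ) ^ (1+ρ) := by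
        rw [← Real.mul_rpow (le_of_lt hb) hnn]
        congr 1
        field_simp
        ring
      have h2 : ((M:ℝ)+1) ^ (1+ρ) * (1 + (1+ρ) * (-(1/((M:ℝ)+1)))) ≤ (M:ℝ) ^ (1+ρ) := by
        rw [← hmul]
        exact mul_le_mul_of_nonneg_left hber (Real.rpow_nonneg (le_of_lt hb) _)
      have h3 : ((M:ℝ)+1) ^ (1+ρ) * (1/((M:ℝ)+1)) = ((M:ℝ)+1) ^ ρ := by
        rw [Real.rpow_add hb, Real.rpow_one]
        field_simp
      nlinarith [h2, h3]
    have hcast : ((M+1 : ℕ) : ℝ) = (M:ℝ) + 1 := by push_cast; ring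
    rw [hcast]
    linarith [key, ih]

lemma aux_sum_range_mul (f : ℕ → ℝ) (J M : ℕ) :
    ∑ m ∈ Finset.range (J*M), f m
      = ∑ j ∈ Finset.range J, ∑ i ∈ Finset.range M, f (j*M+i) := by
  induction J with
  | zero => simp
  | succ J ih =>
    rw [Nat.succ_mul, Finset.sum_range_add, ih, Finset.sum_range_succ]

/-- Saturated-moment vs. group-wise guessing moment: let `p i` (for `i : ℕ`,
`0`-based) be the probabilities of the messages enumerated in nonincreasing
order, with `p i = 0` for `i ≥ N` (indices beyond `|X|` are dummy messages of
probability `0`), and pad so that `N ≤ J·M`.  Then for any `ρ > 0` and `M ≥ 1`,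
`∑_{m} p m · (min (m+1) M)^ρ ≤ (2+ρ) · ∑_{j<J} ∑_{i<M} p (jM+i) · (i+1)^ρ`. -/
theorem stmt12 (p : ℕ → ℝ) (hp0 : ∀ i, 0 ≤ p i) (hanti : Antitone p)
    (N : ℕ) (hN : 0 < N) (hsupp : ∀ i, N ≤ i → p i = 0)
    (hsum : ∑ i ∈ Finset.range N, p i = 1)
    (M : ℕ) (hM : 1 ≤ M) (J : ℕ) (hJ : N ≤ J * M)
    (ρ : ℝ) (hρ : 0 < ρ) :
    ∑ m ∈ Finset.range N, p m * ((min (m + 1) M : ℕ) : ℝ) ^ ρ ≤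
      (2 + ρ) * ∑ j ∈ Finset.range J, ∑ i ∈ Finset.range M,
        p (j * M + i) * ((i : ℝ) + 1) ^ ρ := by
  set S : ℕ → ℝ := fun j => ∑ i ∈ Finset.range M, p (j*M+i) * ((i:ℝ)+1)^ρ with hSdef
  have hSnn : ∀ j, 0 ≤ S j := by
    intro j
    exact Finset.sum_nonneg fun i _ => mul_nonneg (hp0 _) (by positivity)
  set g : ℕ → ℝ := fun j =>
      ∑ i ∈ Finset.range M, p (j*M+i) * ((min (j*M+i+1) M : ℕ) : ℝ)^ρ with hgdef
  -- extend LHS to range (J*M)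
  have hext : ∑ m ∈ Finset.range N, p m * ((min (m + 1) M : ℕ) : ℝ) ^ ρ
      = ∑ m ∈ Finset.range (J*M), p m * ((min (m + 1) M : ℕ) : ℝ) ^ ρ := by
    apply Finset.sum_subset (Finset.range_subset_range.2 hJ)
    intro x _ hx
    rw [hsupp x (le_of_not_gt fun h => hx (Finset.mem_range.2 h))]
    ring
  have hdec : ∑ m ∈ Finset.range (J*M), p m * ((min (m + 1) M : ℕ) : ℝ) ^ ρ
      = ∑ j ∈ Finset.range J, g j :=
    aux_sum_range_mul (fun m => p m * ((min (m + 1) M : ℕ) : ℝ) ^ ρ) J M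
  -- g 0 = S 0
  have hg0 : g 0 = S 0 := by
    apply Finset.sum_congr rfl
    intro i hi
    have : min (0*M+i+1) M = i+1 := by
      rw [zero_mul, zero_add]
      exact min_eq_left (Finset.mem_range.1 hi)
    rw [this]
    push_cast
    ring
  -- g (j+1) ≤ (1+ρ) * S j
  have hgs : ∀ j, g (j+1) ≤ (1+ρ) * S j := by
    intro j
    have hMpos : (0:ℝ) < (M:ℝ) := by exact_mod_cast hM
    have step1 : g (j+1) ≤ (M:ℝ) * (p ((j+1)*M) * (M:ℝ)^ρ) := by
      have : g (j+1) = ∑ i ∈ Finset.range M, p ((j+1)*M+i) * (M:ℝ)^ρ := by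
        apply Finset.sum_congr rfl
        intro i hi
        have hmin : min ((j+1)*M+i+1) M = M := by
          apply min_eq_right
          calc M ≤ (j+1)*M := Nat.le_mul_of_pos_left M (Nat.succ_pos j)
          _ ≤ (j+1)*M+i+1 := by omega
        rw [hmin]
      rw [this]
      calc ∑ i ∈ Finset.range M, p ((j+1)*M+i) * (M:ℝ)^ρ
          ≤ ∑ _i ∈ Finset.range M, p ((j+1)*M) * (M:ℝ)^ρ := by
            apply Finset.sum_le_sum
            intro i _
            exact mul_le_mul_of_nonneg_right (hanti (Nat.le_add_right _ _))
              (Real.rpow_nonneg (le_of_lt hMpos) _)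
        _ = (M:ℝ) * (p ((j+1)*M) * (M:ℝ)^ρ) := by
            rw [Finset.sum_const, Finset.card_range, nsmul_eq_mul]
    have step2 : (M:ℝ) * (p ((j+1)*M) * (M:ℝ)^ρ) = p ((j+1)*M) * (M:ℝ)^(1+ρ) := by
      rw [Real.rpow_add hMpos, Real.rpow_one]
      ring
    have step3 : p ((j+1)*M) * (M:ℝ)^(1+ρ)
        ≤ p ((j+1)*M) * ((1+ρ) * ∑ i ∈ Finset.range M, ((i:ℝ)+1)^ρ) :=
      mul_le_mul_of_nonneg_left (aux_sum_rpow_lb ρ hρ M) (hp0 _)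
    have step4 : p ((j+1)*M) * ((1+ρ) * ∑ i ∈ Finset.range M, ((i:ℝ)+1)^ρ)
        ≤ (1+ρ) * S j := by
      rw [hSdef]
      simp only
      rw [Finset.mul_sum, Finset.mul_sum, Finset.mul_sum]
      apply Finset.sum_le_sum
      intro i hi
      have hle : p ((j+1)*M) ≤ p (j*M+i) := by
        apply hanti
        have : j*M+i < (j+1)*M := by
          have := Finset.mem_range.1 hi
          calc j*M+i < j*M+M := by omega
          _ = (j+1)*M := by ring
        omega
      have h1 : (0:ℝ) ≤ ((i:ℝ)+1)^ρ := by positivity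
      nlinarith [hρ, mul_le_mul_of_nonneg_right hle h1]
    linarith [step1, step2.le, step3, step4]
  -- J = K + 1
  obtain ⟨K, rfl⟩ : ∃ K, J = K + 1 := by
    have : 0 < J := by
      rcases Nat.eq_zero_or_pos J with h | h
      · subst h; simp at hJ; omega
      · exact h
    exact ⟨J - 1, by omega⟩
  rw [hext, hdec, Finset.sum_range_succ']
  have hsub : ∑ j ∈ Finset.range K, S j ≤ ∑ j ∈ Finset.range (K+1), S j := by
    apply Finset.sum_le_sum_of_subset_of_nonneg
      (Finset.range_subset_range.2 (Nat.le_succ K))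
    intro j _ _
    exact hSnn j
  have hS0 : S 0 ≤ ∑ j ∈ Finset.range (K+1), S j :=
    Finset.single_le_sum (fun j _ => hSnn j) (Finset.mem_range.2 (Nat.succ_pos K))
  have hmid : ∑ j ∈ Finset.range K, g (j+1) ≤ (1+ρ) * ∑ j ∈ Finset.range K, S j := by
    rw [Finset.mul_sum]
    exact Finset.sum_le_sum fun j _ => hgs j
  have hrhs : ∑ j ∈ Finset.range (K+1), ∑ i ∈ Finset.range M,
      p (j * M + i) * ((i : ℝ) + 1) ^ ρ = ∑ j ∈ Finset.range (K+1), S j := rfl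
  rw [hrhs, hg0]
  have hρ1 : (0:ℝ) ≤ 1 + ρ := by linarith
  nlinarith [hmid, hsub, hS0, mul_le_mul_of_nonneg_left hsub hρ1]
end

section
/- Restricted divergence upper bound: for PMFs Q ≪ P on a finite set and B with Q(B) > 0, D(Q_B‖P) ≤ −ln Q(B) + D(Q‖P)/Q(B) + 1/Q(B), where Q_B is the conditional distribution of Q given B. -/
/-- Restricted divergence upper bound: for PMFs `Q ≪ P` on a finite set and
`B` with `Q(B) > 0`,
`D(Q_B‖P) ≤ −ln Q(B) + D(Q‖P)/Q(B) + 1/Q(B)`,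
where `Q_B` is the conditional distribution of `Q` given `B`. -/
theorem stmt17 {S : Type*} [Fintype S]
    (P Q : S → ℝ) (hP0 : ∀ x, 0 ≤ P x) (hP1 : ∑ x : S, P x = 1)
    (hQ0 : ∀ x, 0 ≤ Q x) (hQ1 : ∑ x : S, Q x = 1)
    (hac : ∀ x, P x = 0 → Q x = 0)
    (B : Finset S) (hQB : 0 < ∑ x ∈ B, Q x) :
    ∑ x ∈ B, (Q x / ∑ y ∈ B, Q y) * Real.log ((Q x / ∑ y ∈ B, Q y) / P x) ≤
      - Real.log (∑ x ∈ B, Q x)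
      + (∑ x : S, Q x * Real.log (Q x / P x)) / (∑ x ∈ B, Q x)
      + 1 / (∑ x ∈ B, Q x) := by
  classical
  set q := ∑ x ∈ B, Q x with hqdef
  have hq : 0 < q := hQB
  have hq0 : q ≠ 0 := hq.ne'
  have key : ∀ x ∈ B, (Q x / q) * Real.log ((Q x / q) / P x)
      = Q x * Real.log (Q x / P x) / q - (Q x / q) * Real.log q := by
    intro x _
    rcases eq_or_lt_of_le (hQ0 x) with h | h
    · simp [← h]
    · have hP : 0 < P x := by
        rcases eq_or_lt_of_le (hP0 x) with hp | hp
        · exact absurd (hac x hp.symm) h.ne'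
        · exact hp
      have heq : (Q x / q) / P x = (Q x / P x) / q := by ring
      rw [heq, Real.log_div (by positivity) hq0]
      ring
  rw [Finset.sum_congr rfl key, Finset.sum_sub_distrib]
  have hsum1 : ∑ x ∈ B, (Q x / q) * Real.log q = Real.log q := by
    rw [← Finset.sum_mul, ← Finset.sum_div, ← hqdef]
    field_simp
  rw [hsum1, ← Finset.sum_div]
  have hDB : ∑ x ∈ B, Q x * Real.log (Q x / P x)
      ≤ (∑ x : S, Q x * Real.log (Q x / P x)) + 1 := by
    have hsplit : ∑ x ∈ B, Q x * Real.log (Q x / P x)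
        + ∑ x ∈ Bᶜ, Q x * Real.log (Q x / P x)
        = ∑ x : S, Q x * Real.log (Q x / P x) :=
      Finset.sum_add_sum_compl B _
    have h1 : ∀ x ∈ Bᶜ, Q x - P x ≤ Q x * Real.log (Q x / P x) := by
      intro x _
      rcases eq_or_lt_of_le (hQ0 x) with h | h
      · simp [← h, hP0 x]
      · have hP : 0 < P x := by
          rcases eq_or_lt_of_le (hP0 x) with hp | hp
          · exact absurd (hac x hp.symm) h.ne'
          · exact hp
        have hlog : 1 - (Q x / P x)⁻¹ ≤ Real.log (Q x / P x) :=
          Real.one_sub_inv_le_log_of_pos (by positivity)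
        have heq : Q x * (1 - (Q x / P x)⁻¹) = Q x - P x := by
          field_simp
        nlinarith [mul_le_mul_of_nonneg_left hlog (hQ0 x)]
    have h2 : ∑ x ∈ Bᶜ, (Q x - P x) ≤ ∑ x ∈ Bᶜ, Q x * Real.log (Q x / P x) :=
      Finset.sum_le_sum h1
    have h3 : ∑ x ∈ Bᶜ, (Q x - P x) = (∑ x ∈ Bᶜ, Q x) - ∑ x ∈ Bᶜ, P x :=
      Finset.sum_sub_distrib _ _
    have hPle : ∑ x ∈ Bᶜ, P x ≤ 1 := by
      rw [← hP1]
      exact Finset.sum_le_sum_of_subset_of_nonneg (Finset.subset_univ _)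
        (fun x _ _ => hP0 x)
    have hQnn : 0 ≤ ∑ x ∈ Bᶜ, Q x := Finset.sum_nonneg fun x _ => hQ0 x
    linarith
  have hdiv : (∑ x ∈ B, Q x * Real.log (Q x / P x)) / q
      ≤ ((∑ x : S, Q x * Real.log (Q x / P x)) + 1) / q :=
    by gcongr
  linarith [add_div (∑ x : S, Q x * Real.log (Q x / P x)) 1 q]
end

section
/- For an iid source with marginal P₁ on a finite set X, for every sequence of PMFs (P_{Y^n}) on X^n there exists a single-letter PMF Q on X (a limit point of the Cesàro averages of the marginals of P_{Y^n}) such that limsup_n (1/n) D(P_{Y^n}‖P₁^{⊗n}) ≥ D(Q‖P₁) and liminf_n (1/n) H(P_{Y^n}) ≤ H(Q). -/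
open Filter Finset
open scoped Classical

/-- Gibbs' inequality (log-sum form). -/
lemma gibbs_aux_s18 {ι : Type*} [Fintype ι] (p q : ι → ℝ) (hp : ∀ i, 0 ≤ p i)
    (hq : ∀ i, 0 ≤ q i) (hpq : ∀ i, q i = 0 → p i = 0)
    (hsum : ∑ i, q i ≤ ∑ i, p i) :
    ∑ i, p i * Real.log (q i) ≤ ∑ i, p i * Real.log (p i) := by
  have key : ∀ i, p i * Real.log (q i) - p i * Real.log (p i) ≤ q i - p i := by
    intro i
    rcases eq_or_lt_of_le (hp i) with h | h
    · simp only [← h, zero_mul, sub_zero, sub_self]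
      linarith [hq i]
    · have hqi : 0 < q i := by
        rcases eq_or_lt_of_le (hq i) with h0 | h0
        · exact absurd (hpq i h0.symm) (ne_of_gt h)
        · exact h0
      have hlog := Real.log_le_sub_one_of_pos (div_pos hqi h)
      rw [Real.log_div (ne_of_gt hqi) (ne_of_gt h)] at hlog
      have := mul_le_mul_of_nonneg_left hlog (le_of_lt h)
      have hp' : p i ≠ 0 := ne_of_gt h
      have hc : p i * (q i / p i - 1) = q i - p i := by field_simp
      rw [mul_sub] at this
      exact le_trans this (le_of_eq hc)
  have hsum2 := Finset.sum_le_sum (fun i (_ : i ∈ Finset.univ) => key i)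
  rw [Finset.sum_sub_distrib, Finset.sum_sub_distrib] at hsum2
  linarith

lemma negMulLog_le_one_aux {x : ℝ} (hx : 0 ≤ x) : Real.negMulLog x ≤ 1 := by
  rcases eq_or_lt_of_le hx with h | h
  · simp [← h]
  · have h1 := Real.log_le_sub_one_of_pos (show (0:ℝ) < 1/x by positivity)
    rw [Real.log_div one_ne_zero (ne_of_gt h), Real.log_one] at h1
    have := mul_le_mul_of_nonneg_left h1 (le_of_lt h)
    simp only [Real.negMulLog]
    have hx1 : x * (1/x) = 1 := by field_simp
    nlinarith

/-- The `i`-th marginal of `PY n`. -/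
noncomputable def margAux {X : Type*} [Fintype X] (PY : ∀ n : ℕ, (Fin n → X) → ℝ)
    (n : ℕ) (i : Fin n) (a : X) : ℝ :=
  ∑ x : Fin n → X, if x i = a then PY n x else 0

/-- Cesàro average of the marginals. -/
noncomputable def cesAux {X : Type*} [Fintype X] (PY : ∀ n : ℕ, (Fin n → X) → ℝ)
    (n : ℕ) (a : X) : ℝ :=
  (1 / (n : ℝ)) * ∑ i : Fin n, margAux PY n i a

section facts
variable {X : Type*} [Fintype X] {PY : ∀ n : ℕ, (Fin n → X) → ℝ}

lemma marg_nonneg (hY0 : ∀ n x, 0 ≤ PY n x) (n : ℕ) (i : Fin n) (a : X) :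
    0 ≤ margAux PY n i a :=
  Finset.sum_nonneg fun x _ => by split <;> [exact hY0 n x; exact le_rfl]

lemma marg_exchange (n : ℕ) (i : Fin n) (g : X → ℝ) :
    ∑ x : Fin n → X, PY n x * g (x i) = ∑ a : X, margAux PY n i a * g a := by
  unfold margAux
  calc ∑ x : Fin n → X, PY n x * g (x i)
      = ∑ x : Fin n → X, ∑ a : X, (if x i = a then PY n x * g a else 0) := by
        refine Finset.sum_congr rfl fun x _ => ?_
        simp
    _ = ∑ a : X, ∑ x : Fin n → X, (if x i = a then PY n x * g a else 0) :=
        Finset.sum_comm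
    _ = ∑ a : X, (∑ x : Fin n → X, if x i = a then PY n x else 0) * g a := by
        refine Finset.sum_congr rfl fun a _ => ?_
        rw [Finset.sum_mul]
        refine Finset.sum_congr rfl fun x _ => ?_
        split <;> simp

lemma marg_sum (hY1 : ∀ n, ∑ x : Fin n → X, PY n x = 1) (n : ℕ) (i : Fin n) :
    ∑ a : X, margAux PY n i a = 1 := by
  have := marg_exchange (PY := PY) n i (fun _ => (1:ℝ))
  simpa [hY1 n] using this.symm

lemma le_marg (hY0 : ∀ n x, 0 ≤ PY n x) (n : ℕ) (i : Fin n) (x : Fin n → X) :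
    PY n x ≤ margAux PY n i (x i) := by
  have := Finset.single_le_sum
    (f := fun x' : Fin n → X => if x' i = x i then PY n x' else 0)
    (fun x' _ => by split <;> [exact hY0 n x'; exact le_rfl]) (Finset.mem_univ x)
  simpa [margAux] using this

lemma marg_le_one (hY0 : ∀ n x, 0 ≤ PY n x) (hY1 : ∀ n, ∑ x : Fin n → X, PY n x = 1)
    (n : ℕ) (i : Fin n) (a : X) : margAux PY n i a ≤ 1 := by
  rw [← marg_sum hY1 n i]
  exact Finset.single_le_sum (f := fun a => margAux PY n i a)
    (fun a _ => marg_nonneg hY0 n i a) (Finset.mem_univ a)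

lemma ces_nonneg (hY0 : ∀ n x, 0 ≤ PY n x) (n : ℕ) (a : X) : 0 ≤ cesAux PY n a := by
  unfold cesAux
  have : (0:ℝ) ≤ 1 / (n:ℝ) := by positivity
  exact mul_nonneg this (Finset.sum_nonneg fun i _ => marg_nonneg hY0 n i a)

lemma mul_ces (n : ℕ) (a : X) : (n : ℝ) * cesAux PY n a = ∑ i : Fin n, margAux PY n i a := by
  unfold cesAux
  rcases Nat.eq_zero_or_pos n with h | h
  · subst h; simp
  · have hn : (n:ℝ) ≠ 0 := Nat.cast_ne_zero.mpr h.ne'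
    field_simp

lemma ces_sum (hY1 : ∀ n, ∑ x : Fin n → X, PY n x = 1) {n : ℕ} (hn : 0 < n) :
    ∑ a : X, cesAux PY n a = 1 := by
  have hn' : (n:ℝ) ≠ 0 := Nat.cast_ne_zero.mpr hn.ne'
  unfold cesAux
  rw [← Finset.mul_sum, Finset.sum_comm]
  simp only [marg_sum hY1 n]
  simp [hn']

lemma ces_le_one (hY0 : ∀ n x, 0 ≤ PY n x) (hY1 : ∀ n, ∑ x : Fin n → X, PY n x = 1)
    (n : ℕ) (a : X) : cesAux PY n a ≤ 1 := by
  rcases Nat.eq_zero_or_pos n with h | h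
  · subst h; simp [cesAux]
  · rw [← ces_sum hY1 h]
    exact Finset.single_le_sum (f := fun a => cesAux PY n a)
      (fun a _ => ces_nonneg hY0 n a) (Finset.mem_univ a)
end facts

lemma sum_prod_fun {X ι : Type*} [Fintype X] [Fintype ι] [DecidableEq ι] (f : ι → X → ℝ) :
    ∑ x : ι → X, ∏ i, f i (x i) = ∏ i, ∑ a, f i a := by
  rw [Finset.prod_univ_sum, Fintype.piFinset_univ]

section core
variable {X : Type*} [Fintype X] {PY : ∀ n : ℕ, (Fin n → X) → ℝ}
  (hY0 : ∀ n x, 0 ≤ PY n x) (hY1 : ∀ n, ∑ x : Fin n → X, PY n x = 1)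

include hY0 hY1 in
lemma key_entropy {n : ℕ} (hn : 0 < n) :
    (n:ℝ) * ∑ a : X, cesAux PY n a * Real.log (cesAux PY n a) ≤
      ∑ x : Fin n → X, PY n x * Real.log (PY n x) := by
  have hq0 : ∀ x : Fin n → X, 0 ≤ ∏ i, margAux PY n i (x i) :=
    fun x => Finset.prod_nonneg fun i _ => marg_nonneg hY0 n i (x i)
  have hpq : ∀ x, (∏ i, margAux PY n i (x i)) = 0 → PY n x = 0 := by
    intro x hx
    obtain ⟨i, -, hi⟩ := Finset.prod_eq_zero_iff.mp hx
    exact le_antisymm (hi ▸ le_marg hY0 n i x) (hY0 n x)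
  have hqsum : ∑ x : Fin n → X, ∏ i, margAux PY n i (x i) = 1 := by
    have h := sum_prod_fun (fun (i : Fin n) (a : X) => margAux PY n i a)
    have h2 : ∏ i : Fin n, ∑ a : X, margAux PY n i a = 1 := by simp [marg_sum hY1 n]
    exact h.trans h2
  have hg := gibbs_aux_s18 (PY n) (fun x => ∏ i, margAux PY n i (x i)) (hY0 n) hq0 hpq
    (by rw [hqsum, hY1 n])
  have hrw : ∑ x : Fin n → X, PY n x * Real.log (∏ i, margAux PY n i (x i))
      = ∑ i : Fin n, ∑ a : X, margAux PY n i a * Real.log (margAux PY n i a) := by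
    calc ∑ x : Fin n → X, PY n x * Real.log (∏ i, margAux PY n i (x i))
        = ∑ x : Fin n → X, ∑ i : Fin n, PY n x * Real.log (margAux PY n i (x i)) := by
          refine Finset.sum_congr rfl fun x _ => ?_
          rcases eq_or_lt_of_le (hY0 n x) with h | h
          · simp [← h]
          · rw [Real.log_prod
              (fun i _ => ne_of_gt (lt_of_lt_of_le h (le_marg hY0 n i x))), Finset.mul_sum]
      _ = ∑ i : Fin n, ∑ x : Fin n → X, PY n x * Real.log (margAux PY n i (x i)) :=
          Finset.sum_comm
      _ = ∑ i : Fin n, ∑ a : X, margAux PY n i a * Real.log (margAux PY n i a) :=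
          Finset.sum_congr rfl fun i _ =>
            marg_exchange n i (fun a => Real.log (margAux PY n i a))
  rw [hrw] at hg
  have hconc : ∀ i : Fin n, ∑ a : X, margAux PY n i a * Real.log (cesAux PY n a)
      ≤ ∑ a : X, margAux PY n i a * Real.log (margAux PY n i a) := by
    intro i
    refine gibbs_aux_s18 _ _ (marg_nonneg hY0 n i) (ces_nonneg hY0 n) ?_ ?_
    · intro a ha
      have h2 : margAux PY n i a ≤ (n:ℝ) * cesAux PY n a := by
        rw [mul_ces]
        exact Finset.single_le_sum (fun j _ => marg_nonneg hY0 n j a) (Finset.mem_univ i)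
      have h3 := marg_nonneg hY0 n i a
      rw [ha, mul_zero] at h2
      linarith
    · rw [ces_sum hY1 hn, marg_sum hY1 n i]
  have hsum3 := Finset.sum_le_sum (fun i (_ : i ∈ (Finset.univ : Finset (Fin n))) => hconc i)
  have heq : ∑ i : Fin n, ∑ a : X, margAux PY n i a * Real.log (cesAux PY n a)
      = (n:ℝ) * ∑ a : X, cesAux PY n a * Real.log (cesAux PY n a) := by
    rw [Finset.sum_comm, Finset.mul_sum]
    refine Finset.sum_congr rfl fun a _ => ?_
    rw [← Finset.sum_mul, ← mul_ces, mul_assoc]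
  rw [heq] at hsum3
  exact le_trans hsum3 hg

lemma lin_aux (P₁ : X → ℝ) (hP0 : ∀ x, 0 < P₁ x) (n : ℕ) :
    ∑ x : Fin n → X, PY n x * Real.log (∏ i, P₁ (x i))
      = (n:ℝ) * ∑ a : X, cesAux PY n a * Real.log (P₁ a) := by
  calc ∑ x : Fin n → X, PY n x * Real.log (∏ i, P₁ (x i))
      = ∑ x : Fin n → X, ∑ i : Fin n, PY n x * Real.log (P₁ (x i)) := by
        refine Finset.sum_congr rfl fun x _ => ?_
        rw [Real.log_prod (fun i _ => ne_of_gt (hP0 (x i))), Finset.mul_sum]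
    _ = ∑ i : Fin n, ∑ x : Fin n → X, PY n x * Real.log (P₁ (x i)) := Finset.sum_comm
    _ = ∑ i : Fin n, ∑ a : X, margAux PY n i a * Real.log (P₁ a) :=
        Finset.sum_congr rfl fun i _ => marg_exchange n i (fun a => Real.log (P₁ a))
    _ = ∑ a : X, (∑ i : Fin n, margAux PY n i a) * Real.log (P₁ a) := by
        rw [Finset.sum_comm]
        exact Finset.sum_congr rfl fun a _ => by rw [Finset.sum_mul]
    _ = (n:ℝ) * ∑ a : X, cesAux PY n a * Real.log (P₁ a) := by
        rw [Finset.mul_sum]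
        refine Finset.sum_congr rfl fun a _ => ?_
        rw [← mul_ces, mul_assoc]

include hY0 in
lemma fsplit_aux (P₁ : X → ℝ) (hP0 : ∀ x, 0 < P₁ x) (n : ℕ) :
    ∑ x : Fin n → X, PY n x * Real.log (PY n x / ∏ i, P₁ (x i))
      = ∑ x : Fin n → X, PY n x * Real.log (PY n x)
        - ∑ x : Fin n → X, PY n x * Real.log (∏ i, P₁ (x i)) := by
  rw [← Finset.sum_sub_distrib]
  refine Finset.sum_congr rfl fun x _ => ?_
  rcases eq_or_lt_of_le (hY0 n x) with h | h
  · simp [← h]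
  · rw [Real.log_div (ne_of_gt h) (ne_of_gt (Finset.prod_pos fun i _ => hP0 (x i))), mul_sub]

include hY0 hY1 in
lemma f_nonneg_aux (P₁ : X → ℝ) (hP0 : ∀ x, 0 < P₁ x) (hP1 : ∑ x : X, P₁ x = 1) (n : ℕ) :
    0 ≤ ∑ x : Fin n → X, PY n x * Real.log (PY n x / ∏ i, P₁ (x i)) := by
  have hqsum : ∑ x : Fin n → X, ∏ i, P₁ (x i) = 1 := by
    have h := sum_prod_fun (fun (_ : Fin n) (a : X) => P₁ a)
    have h2 : ∏ _i : Fin n, ∑ a : X, P₁ a = 1 := by simp [hP1]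
    exact h.trans h2
  have hg := gibbs_aux_s18 (PY n) (fun x => ∏ i, P₁ (x i)) (hY0 n)
    (fun x => Finset.prod_nonneg fun i _ => le_of_lt (hP0 (x i)))
    (fun x hx => absurd hx (ne_of_gt (Finset.prod_pos fun i _ => hP0 (x i))))
    (by rw [hqsum, hY1 n])
  rw [fsplit_aux hY0 P₁ hP0 n]
  linarith
end core

/-- Single-letter relative entropy, written continuously via `negMulLog`. -/
noncomputable def DAux {X : Type*} [Fintype X] (P₁ : X → ℝ) (g : X → ℝ) : ℝ :=
  ∑ a : X, (-(Real.negMulLog (g a)) - g a * Real.log (P₁ a))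

/-- Single-letter entropy. -/
noncomputable def HAux {X : Type*} [Fintype X] (g : X → ℝ) : ℝ :=
  ∑ a : X, Real.negMulLog (g a)

section single
variable {X : Type*} [Fintype X]

lemma DAux_cont (P₁ : X → ℝ) : Continuous (DAux (X := X) P₁) := by
  refine continuous_finset_sum _ fun a _ => ?_
  exact ((Real.continuous_negMulLog.comp (continuous_apply a)).neg).sub
    ((continuous_apply a).mul continuous_const)

lemma HAux_cont : Continuous (HAux (X := X)) :=
  continuous_finset_sum _ fun a _ => Real.continuous_negMulLog.comp (continuous_apply a)

lemma DAux_eq (P₁ : X → ℝ) (hP0 : ∀ x, 0 < P₁ x) (g : X → ℝ) (hg : ∀ a, 0 ≤ g a) :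
    ∑ a : X, g a * Real.log (g a / P₁ a) = DAux P₁ g := by
  refine Finset.sum_congr rfl fun a _ => ?_
  rcases eq_or_lt_of_le (hg a) with h | h
  · simp [← h]
  · rw [Real.log_div (ne_of_gt h) (ne_of_gt (hP0 a))]
    simp [Real.negMulLog]
    ring

lemma HAux_eq (g : X → ℝ) : ∑ a : X, -(g a * Real.log (g a)) = HAux g := by
  refine Finset.sum_congr rfl fun a _ => ?_
  simp [Real.negMulLog_eq_neg]

lemma DAux_split (P₁ : X → ℝ) (g : X → ℝ) :
    DAux P₁ g = (∑ a : X, g a * Real.log (g a)) - ∑ a : X, g a * Real.log (P₁ a) := by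
  unfold DAux
  rw [Finset.sum_sub_distrib]
  congr 1
  refine Finset.sum_congr rfl fun a _ => ?_
  simp [Real.negMulLog_eq_neg]

lemma HAux_split (g : X → ℝ) : HAux g = -∑ a : X, g a * Real.log (g a) := by
  unfold HAux
  rw [← Finset.sum_neg_distrib]
  exact Finset.sum_congr rfl fun a _ => by simp [Real.negMulLog_eq_neg]
end single

section perN
variable {X : Type*} [Fintype X] {PY : ∀ n : ℕ, (Fin n → X) → ℝ}
  (hY0 : ∀ n x, 0 ≤ PY n x) (hY1 : ∀ n, ∑ x : Fin n → X, PY n x = 1)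

include hY0 hY1 in
lemma half_key {n : ℕ} (hn : 0 < n) :
    ∑ a : X, cesAux PY n a * Real.log (cesAux PY n a)
      ≤ (1 / (n : ℝ)) * ∑ x : Fin n → X, PY n x * Real.log (PY n x) := by
  have hnpos : (0:ℝ) < (n:ℝ) := Nat.cast_pos.mpr hn
  have h2 := mul_le_mul_of_nonneg_left (key_entropy hY0 hY1 hn)
    (le_of_lt (one_div_pos.mpr hnpos))
  rw [← mul_assoc, one_div_mul_cancel (ne_of_gt hnpos), one_mul] at h2
  exact h2

include hY0 hY1 in
lemma DAux_le (P₁ : X → ℝ) (hP0 : ∀ x, 0 < P₁ x) {n : ℕ} (hn : 0 < n) :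
    DAux P₁ (cesAux PY n) ≤
      (1 / (n : ℝ)) * ∑ x : Fin n → X, PY n x * Real.log (PY n x / ∏ i, P₁ (x i)) := by
  have hnpos : (0:ℝ) < (n:ℝ) := Nat.cast_pos.mpr hn
  have h2 := half_key hY0 hY1 hn
  calc DAux P₁ (cesAux PY n)
      = (∑ a : X, cesAux PY n a * Real.log (cesAux PY n a))
          - ∑ a : X, cesAux PY n a * Real.log (P₁ a) := DAux_split P₁ _
    _ ≤ (1 / (n : ℝ)) * (∑ x : Fin n → X, PY n x * Real.log (PY n x))
          - ∑ a : X, cesAux PY n a * Real.log (P₁ a) := by linarith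
    _ = (1 / (n : ℝ)) * ((∑ x : Fin n → X, PY n x * Real.log (PY n x))
          - (n:ℝ) * ∑ a : X, cesAux PY n a * Real.log (P₁ a)) := by
        field_simp
    _ = (1 / (n : ℝ)) * ∑ x : Fin n → X, PY n x * Real.log (PY n x / ∏ i, P₁ (x i)) := by
        rw [fsplit_aux hY0 P₁ hP0 n, lin_aux P₁ hP0 n]

include hY0 hY1 in
lemma le_HAux {n : ℕ} (hn : 0 < n) :
    (1 / (n : ℝ)) * ∑ x : Fin n → X, -(PY n x * Real.log (PY n x)) ≤ HAux (cesAux PY n) := by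
  have h2 := half_key hY0 hY1 hn
  have hl : ∑ x : Fin n → X, -(PY n x * Real.log (PY n x))
      = -∑ x : Fin n → X, PY n x * Real.log (PY n x) := by
    rw [Finset.sum_neg_distrib]
  rw [hl, HAux_split, mul_neg]
  exact neg_le_neg h2

include hY0 hY1 in
lemma PY_le_one (n : ℕ) (x : Fin n → X) : PY n x ≤ 1 := by
  have := Finset.single_le_sum (f := PY n) (fun x' _ => hY0 n x') (Finset.mem_univ x)
  rw [hY1 n] at this
  exact this

include hY0 hY1 in
lemma Spp_nonpos (n : ℕ) : ∑ x : Fin n → X, PY n x * Real.log (PY n x) ≤ 0 :=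
  Finset.sum_nonpos fun x _ => Real.mul_log_nonpos (hY0 n x) (PY_le_one hY0 hY1 n x)

include hY0 hY1 in
lemma F_nonneg (P₁ : X → ℝ) (hP0 : ∀ x, 0 < P₁ x) (hP1 : ∑ x : X, P₁ x = 1) (n : ℕ) :
    0 ≤ (1 / (n : ℝ)) * ∑ x : Fin n → X, PY n x * Real.log (PY n x / ∏ i, P₁ (x i)) :=
  mul_nonneg (by positivity) (f_nonneg_aux hY0 hY1 P₁ hP0 hP1 n)

include hY0 hY1 in
lemma F_le (P₁ : X → ℝ) (hP0 : ∀ x, 0 < P₁ x) (n : ℕ) :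
    (1 / (n : ℝ)) * ∑ x : Fin n → X, PY n x * Real.log (PY n x / ∏ i, P₁ (x i))
      ≤ ∑ a : X, |Real.log (P₁ a)| := by
  have hC : (0:ℝ) ≤ ∑ a : X, |Real.log (P₁ a)| :=
    Finset.sum_nonneg fun a _ => abs_nonneg _
  rcases Nat.eq_zero_or_pos n with rfl | hn
  · norm_num
    exact hC
  · have hnpos : (0:ℝ) < (n:ℝ) := Nat.cast_pos.mpr hn
    rw [fsplit_aux hY0 P₁ hP0 n, lin_aux P₁ hP0 n]
    have h1 : (1 / (n:ℝ)) * ((∑ x : Fin n → X, PY n x * Real.log (PY n x))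
        - (n:ℝ) * ∑ a : X, cesAux PY n a * Real.log (P₁ a))
        = (1 / (n:ℝ)) * (∑ x : Fin n → X, PY n x * Real.log (PY n x))
          - ∑ a : X, cesAux PY n a * Real.log (P₁ a) := by
      field_simp
    rw [h1]
    have h2 : (1 / (n:ℝ)) * (∑ x : Fin n → X, PY n x * Real.log (PY n x)) ≤ 0 := by
      have := mul_le_mul_of_nonneg_left (Spp_nonpos hY0 hY1 n)
        (le_of_lt (one_div_pos.mpr hnpos))
      simpa using this
    have h3 : -∑ a : X, cesAux PY n a * Real.log (P₁ a) ≤ ∑ a : X, |Real.log (P₁ a)| := by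
      rw [← Finset.sum_neg_distrib]
      refine Finset.sum_le_sum fun a _ => ?_
      have hc0 := ces_nonneg hY0 n a
      have hc1 := ces_le_one hY0 hY1 n a
      rcases abs_cases (Real.log (P₁ a)) with ⟨he, hp⟩ | ⟨he, hp⟩ <;> nlinarith
    linarith

include hY0 hY1 in
lemma h_nonneg (n : ℕ) :
    0 ≤ (1 / (n : ℝ)) * ∑ x : Fin n → X, -(PY n x * Real.log (PY n x)) :=
  mul_nonneg (by positivity) (Finset.sum_nonneg fun x _ =>
    neg_nonneg.mpr (Real.mul_log_nonpos (hY0 n x) (PY_le_one hY0 hY1 n x)))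

include hY0 hY1 in
lemma h_le (n : ℕ) :
    (1 / (n : ℝ)) * ∑ x : Fin n → X, -(PY n x * Real.log (PY n x))
      ≤ (Fintype.card X : ℝ) := by
  rcases Nat.eq_zero_or_pos n with rfl | hn
  · norm_num
  · refine le_trans (le_HAux hY0 hY1 hn) ?_
    unfold HAux
    calc ∑ a : X, Real.negMulLog (cesAux PY n a) ≤ ∑ _a : X, (1:ℝ) :=
          Finset.sum_le_sum fun a _ => negMulLog_le_one_aux (ces_nonneg hY0 n a)
      _ = (Fintype.card X : ℝ) := by simp
end perN

/-- For an iid source with full-support marginal `P₁` on a finite set `X` and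
any sequence of PMFs `(P_{Y^n})` on `X^n`, there exists a single-letter PMF `Q`
on `X` (a limit point of the Cesàro averages of the marginals of `P_{Y^n}`)
such that
`limsup_n (1/n) D(P_{Y^n}‖P₁^{⊗n}) ≥ D(Q‖P₁)` and
`liminf_n (1/n) H(P_{Y^n}) ≤ H(Q)`. -/
theorem stmt18 {X : Type*} [Fintype X] [Nonempty X]
    (P₁ : X → ℝ) (hP0 : ∀ x, 0 < P₁ x) (hP1 : ∑ x : X, P₁ x = 1)
    (PY : ∀ n : ℕ, (Fin n → X) → ℝ)
    (hY0 : ∀ n x, 0 ≤ PY n x) (hY1 : ∀ n, ∑ x : Fin n → X, PY n x = 1) :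
    ∃ Q : X → ℝ, (∀ x, 0 ≤ Q x) ∧ (∑ x : X, Q x = 1) ∧
      (∑ x : X, Q x * Real.log (Q x / P₁ x) ≤
        limsup (fun n : ℕ => (1 / (n : ℝ)) *
          ∑ x : Fin n → X, PY n x * Real.log (PY n x / ∏ i, P₁ (x i))) atTop) ∧
      (liminf (fun n : ℕ => (1 / (n : ℝ)) *
          ∑ x : Fin n → X, -(PY n x * Real.log (PY n x))) atTop ≤
        ∑ x : X, -(Q x * Real.log (Q x))) := by
  classical
  -- the sequences appearing in the statement
  set F : ℕ → ℝ := fun n : ℕ => (1 / (n : ℝ)) *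
    ∑ x : Fin n → X, PY n x * Real.log (PY n x / ∏ i, P₁ (x i)) with hF
  set G : ℕ → ℝ := fun n : ℕ => (1 / (n : ℝ)) *
    ∑ x : Fin n → X, -(PY n x * Real.log (PY n x)) with hG
  -- compactness: a convergent subsequence of the Cesàro averages
  have hmem : ∀ n, cesAux PY n ∈ Set.pi Set.univ (fun _ : X => Set.Icc (0:ℝ) 1) := by
    intro n a _
    exact ⟨ces_nonneg hY0 n a, ces_le_one hY0 hY1 n a⟩
  obtain ⟨Q, hQmem, σ, hσmono, hσtend⟩ :=
    (isCompact_univ_pi fun _ : X => isCompact_Icc).tendsto_subseq hmem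
  have hσge : ∀ k, k ≤ σ k := fun k => hσmono.le_apply
  have hσpos : ∀ᶠ k in atTop, 0 < σ k := by
    filter_upwards [eventually_ge_atTop 1] with k hk
    exact Nat.lt_of_lt_of_le Nat.zero_lt_one (le_trans hk (hσge k))
  have hQ0 : ∀ a, 0 ≤ Q a := fun a => (hQmem a (Set.mem_univ a)).1
  -- sum of Q is 1
  have hsumtend : Tendsto (fun k => ∑ a : X, cesAux PY (σ k) a) atTop (nhds (∑ a : X, Q a)) := by
    refine tendsto_finset_sum _ fun a _ => ?_
    exact ((continuous_apply a).tendsto Q).comp hσtend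
  have hev1 : (fun k => ∑ a : X, cesAux PY (σ k) a) =ᶠ[atTop] fun _ => (1:ℝ) := by
    filter_upwards [hσpos] with k hk
    exact ces_sum hY1 hk
  have hQ1 : ∑ a : X, Q a = 1 :=
    tendsto_nhds_unique (hsumtend.congr' hev1) tendsto_const_nhds
  -- limits of entropy / divergence along the subsequence
  have hDtend : Tendsto (fun k => DAux P₁ (cesAux PY (σ k))) atTop (nhds (DAux P₁ Q)) :=
    ((DAux_cont P₁).tendsto Q).comp hσtend
  have hHtend : Tendsto (fun k => HAux (cesAux PY (σ k))) atTop (nhds (HAux Q)) :=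
    (HAux_cont.tendsto Q).comp hσtend
  set C := ∑ a : X, |Real.log (P₁ a)| with hC
  have hFle : ∀ n, F n ≤ C := fun n => F_le hY0 hY1 P₁ hP0 n
  have hFnn : ∀ n, 0 ≤ F n := fun n => F_nonneg hY0 hY1 P₁ hP0 hP1 n
  have hGnn : ∀ n, 0 ≤ G n := fun n => h_nonneg hY0 hY1 n
  have hGle : ∀ n, G n ≤ (Fintype.card X : ℝ) := fun n => h_le hY0 hY1 n
  refine ⟨Q, hQ0, hQ1, ?_, ?_⟩
  · -- divergence bound
    rw [DAux_eq P₁ hP0 Q hQ0]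
    have step1 : DAux P₁ Q = liminf (fun k => DAux P₁ (cesAux PY (σ k))) atTop :=
      hDtend.liminf_eq.symm
    have step2 : liminf (fun k => DAux P₁ (cesAux PY (σ k))) atTop
        ≤ liminf (fun k => F (σ k)) atTop := by
      refine liminf_le_liminf ?_ ?_ ?_
      · filter_upwards [hσpos] with k hk
        exact DAux_le hY0 hY1 P₁ hP0 hk
      · exact hDtend.isBoundedUnder_ge
      · exact (isBoundedUnder_of ⟨C, fun k => hFle (σ k)⟩).isCoboundedUnder_ge
    have step3 : liminf (fun k => F (σ k)) atTop ≤ limsup (fun k => F (σ k)) atTop :=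
      liminf_le_limsup (isBoundedUnder_of ⟨C, fun k => hFle (σ k)⟩)
        (isBoundedUnder_of ⟨0, fun k => hFnn (σ k)⟩)
    have step4 : limsup (fun k => F (σ k)) atTop = limsup F (Filter.map σ atTop) := by
      rw [Filter.limsup, Filter.limsup, Filter.map_map]
      rfl
    have step5 : limsup F (Filter.map σ atTop) ≤ limsup F atTop := by
      refine limsup_le_limsup_of_le hσmono.tendsto_atTop ?_ ?_
      · exact (isBoundedUnder_of ⟨0, fun k => hFnn k⟩ :
          Filter.IsBoundedUnder (· ≥ ·) (Filter.map σ atTop) F).isCoboundedUnder_le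
      · exact isBoundedUnder_of ⟨C, hFle⟩
    calc DAux P₁ Q = liminf (fun k => DAux P₁ (cesAux PY (σ k))) atTop := step1
      _ ≤ liminf (fun k => F (σ k)) atTop := step2
      _ ≤ limsup (fun k => F (σ k)) atTop := step3
      _ = limsup F (Filter.map σ atTop) := step4
      _ ≤ limsup F atTop := step5
  · -- entropy bound
    rw [HAux_eq Q]
    have step1 : liminf G atTop ≤ liminf G (Filter.map σ atTop) := by
      refine liminf_le_liminf_of_le hσmono.tendsto_atTop ?_ ?_
      · exact isBoundedUnder_of ⟨0, hGnn⟩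
      · exact (isBoundedUnder_of ⟨(Fintype.card X : ℝ), fun k => hGle k⟩ :
          Filter.IsBoundedUnder (· ≤ ·) (Filter.map σ atTop) G).isCoboundedUnder_ge
    have step2 : liminf G (Filter.map σ atTop) = liminf (fun k => G (σ k)) atTop := by
      rw [Filter.liminf, Filter.liminf, Filter.map_map]
      rfl
    have step3 : liminf (fun k => G (σ k)) atTop
        ≤ liminf (fun k => HAux (cesAux PY (σ k))) atTop := by
      refine liminf_le_liminf ?_ ?_ ?_
      · filter_upwards [hσpos] with k hk
        exact le_HAux hY0 hY1 hk
      · exact isBoundedUnder_of ⟨0, fun k => hGnn (σ k)⟩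
      · exact hHtend.isBoundedUnder_le.isCoboundedUnder_ge
    have step4 : liminf (fun k => HAux (cesAux PY (σ k))) atTop = HAux Q :=
      hHtend.liminf_eq
    calc liminf G atTop ≤ liminf G (Filter.map σ atTop) := step1
      _ = liminf (fun k => G (σ k)) atTop := step2
      _ ≤ liminf (fun k => HAux (cesAux PY (σ k))) atTop := step3
      _ = HAux Q := step4
end

section
/- For an iid source with marginal P₁ on finite X and ρ > 0, R > 0, min over θ ∈ [0,ρ] of { (ρ−θ)R + sup_Q [θ H(Q) − D(Q‖P₁)] } = sup over PMFs Q on X of { ρ min{H(Q), R} − D(Q‖P₁) }, where the sup is over PMFs Q on X. -/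
open Real Finset Set

section
variable {X : Type*} [Fintype X]

noncomputable def stmtZf (P₁ : X → ℝ) (θ : ℝ) : ℝ := ∑ x : X, P₁ x ^ (1/(1+θ))
noncomputable def stmtQf (P₁ : X → ℝ) (θ : ℝ) (x : X) : ℝ := P₁ x ^ (1/(1+θ)) / stmtZf P₁ θ

variable {P₁ : X → ℝ} (hP0 : ∀ x, 0 ≤ P₁ x) (hP1 : ∑ x : X, P₁ x = 1)
include hP0 hP1

lemma stmtZf_pos (θ : ℝ) : 0 < stmtZf P₁ θ := by
  obtain ⟨x, hx⟩ : ∃ x, 0 < P₁ x := by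
    by_contra h
    push_neg at h
    have : ∀ x, P₁ x = 0 := fun x => le_antisymm (h x) (hP0 x)
    simp [this] at hP1
  exact Finset.sum_pos' (fun y _ => Real.rpow_nonneg (hP0 y) _)
    ⟨x, Finset.mem_univ x, Real.rpow_pos_of_pos hx _⟩

lemma stmtQf_nonneg (θ : ℝ) (x : X) : 0 ≤ stmtQf P₁ θ x :=
  div_nonneg (Real.rpow_nonneg (hP0 x) _) (stmtZf_pos hP0 hP1 θ).le

lemma stmtQf_sum (θ : ℝ) : ∑ x : X, stmtQf P₁ θ x = 1 := by
  simp only [stmtQf, ← Finset.sum_div]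
  exact div_self (stmtZf_pos hP0 hP1 θ).ne'

lemma stmtQf_zero {θ : ℝ} (hθ : 0 ≤ θ) {x : X} (hx : P₁ x = 0) : stmtQf P₁ θ x = 0 := by
  simp only [stmtQf, hx]
  rw [Real.zero_rpow (by positivity), zero_div]

lemma stmtQf_pos {θ : ℝ} {x : X} (hx : 0 < P₁ x) : 0 < stmtQf P₁ θ x :=
  div_pos (Real.rpow_pos_of_pos hx _) (stmtZf_pos hP0 hP1 θ)

lemma stmt_log_Qf {θ : ℝ} {x : X} (hx : 0 < P₁ x) :
    Real.log (stmtQf P₁ θ x) = (1/(1+θ)) * Real.log (P₁ x) - Real.log (stmtZf P₁ θ) := by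
  rw [stmtQf, Real.log_div (by positivity) (stmtZf_pos hP0 hP1 θ).ne',
    Real.log_rpow hx]

end

section
set_option linter.unusedSectionVars false
variable {X : Type*} [Fintype X]
variable {P₁ : X → ℝ} (hP0 : ∀ x, 0 ≤ P₁ x) (hP1 : ∑ x : X, P₁ x = 1)
include hP0 hP1

lemma stmt_attain {θ : ℝ} (hθ : 0 ≤ θ) :
    θ * (∑ x : X, -(stmtQf P₁ θ x * Real.log (stmtQf P₁ θ x)))
      - ∑ x : X, stmtQf P₁ θ x * Real.log (stmtQf P₁ θ x / P₁ x)
    = (1+θ) * Real.log (stmtZf P₁ θ) := by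
  have h1θ : (0:ℝ) < 1 + θ := by linarith
  rw [Finset.mul_sum, ← Finset.sum_sub_distrib]
  have key : ∀ x : X, θ * -(stmtQf P₁ θ x * Real.log (stmtQf P₁ θ x))
      - stmtQf P₁ θ x * Real.log (stmtQf P₁ θ x / P₁ x)
      = stmtQf P₁ θ x * ((1+θ) * Real.log (stmtZf P₁ θ)) := by
    intro x
    rcases eq_or_lt_of_le (hP0 x) with hx | hx
    · rw [stmtQf_zero hP0 hP1 hθ hx.symm]; ring
    · have hq : 0 < stmtQf P₁ θ x := stmtQf_pos hP0 hP1 hx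
      rw [Real.log_div hq.ne' hx.ne', stmt_log_Qf hP0 hP1 hx]
      field_simp
      ring
  rw [Finset.sum_congr rfl (fun x _ => key x), ← Finset.sum_mul,
    stmtQf_sum hP0 hP1, one_mul]

lemma stmt_gibbs {θ : ℝ} (hθ : 0 ≤ θ) {Q : X → ℝ} (hQ0 : ∀ x, 0 ≤ Q x)
    (hQ1 : ∑ x : X, Q x = 1) (hQa : ∀ x, P₁ x = 0 → Q x = 0) :
    θ * (∑ x : X, -(Q x * Real.log (Q x))) - ∑ x : X, Q x * Real.log (Q x / P₁ x)
      ≤ (1+θ) * Real.log (stmtZf P₁ θ) := by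
  have h1θ : (0:ℝ) < 1 + θ := by linarith
  have hZ := stmtZf_pos hP0 hP1 θ
  rw [Finset.mul_sum, ← Finset.sum_sub_distrib]
  have hsplit : (1+θ) * Real.log (stmtZf P₁ θ)
      = ∑ x : X, Q x * ((1+θ) * Real.log (stmtZf P₁ θ)) := by
    rw [← Finset.sum_mul, hQ1, one_mul]
  rw [hsplit]
  have key : ∀ x : X, θ * -(Q x * Real.log (Q x)) - Q x * Real.log (Q x / P₁ x)
      - Q x * ((1+θ) * Real.log (stmtZf P₁ θ))
      ≤ (1+θ) * (stmtQf P₁ θ x - Q x) := by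
    intro x
    rcases eq_or_lt_of_le (hQ0 x) with hq | hq
    · rw [← hq]
      have := stmtQf_nonneg hP0 hP1 θ x
      nlinarith
    · have hx : 0 < P₁ x := by
        rcases eq_or_lt_of_le (hP0 x) with hx | hx
        · exact absurd (hQa x hx.symm) hq.ne'
        · exact hx
      have hqf : 0 < stmtQf P₁ θ x := stmtQf_pos hP0 hP1 hx
      have hlog : Real.log (stmtQf P₁ θ x / Q x) ≤ stmtQf P₁ θ x / Q x - 1 :=
        Real.log_le_sub_one_of_pos (div_pos hqf hq)
      have hrw : θ * -(Q x * Real.log (Q x)) - Q x * Real.log (Q x / P₁ x)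
          - Q x * ((1+θ) * Real.log (stmtZf P₁ θ))
          = Q x * ((1+θ) * Real.log (stmtQf P₁ θ x / Q x)) := by
        rw [Real.log_div hqf.ne' hq.ne', stmt_log_Qf hP0 hP1 hx,
          Real.log_div hq.ne' hx.ne']
        field_simp
        ring
      rw [hrw]
      calc Q x * ((1+θ) * Real.log (stmtQf P₁ θ x / Q x))
          ≤ Q x * ((1+θ) * (stmtQf P₁ θ x / Q x - 1)) := by
            apply mul_le_mul_of_nonneg_left (mul_le_mul_of_nonneg_left hlog h1θ.le) hq.le
        _ = (1+θ) * (stmtQf P₁ θ x - Q x) := by field_simp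
  rw [← sub_nonpos]
  calc ∑ x : X, (θ * -(Q x * Real.log (Q x)) - Q x * Real.log (Q x / P₁ x))
      - ∑ x : X, Q x * ((1+θ) * Real.log (stmtZf P₁ θ))
      = ∑ x : X, (θ * -(Q x * Real.log (Q x)) - Q x * Real.log (Q x / P₁ x)
        - Q x * ((1+θ) * Real.log (stmtZf P₁ θ))) := by simp only [Finset.sum_sub_distrib]
    _ ≤ ∑ x : X, (1+θ) * (stmtQf P₁ θ x - Q x) := Finset.sum_le_sum (fun x _ => key x)
    _ = (1+θ) * (∑ x : X, stmtQf P₁ θ x - ∑ x : X, Q x) := by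
        rw [← Finset.mul_sum, Finset.sum_sub_distrib]
    _ = 0 := by rw [stmtQf_sum hP0 hP1, hQ1]; ring

end

section
set_option linter.unusedSectionVars false
variable {X : Type*} [Fintype X]
variable {P₁ : X → ℝ} (hP0 : ∀ x, 0 ≤ P₁ x) (hP1 : ∑ x : X, P₁ x = 1)
include hP0 hP1

lemma stmt_kl_nonneg {Q : X → ℝ} (hQ0 : ∀ x, 0 ≤ Q x)
    (hQ1 : ∑ x : X, Q x = 1) (hQa : ∀ x, P₁ x = 0 → Q x = 0) :
    0 ≤ ∑ x : X, Q x * Real.log (Q x / P₁ x) := by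
  have key : ∀ x : X, -(Q x * Real.log (Q x / P₁ x)) ≤ P₁ x - Q x := by
    intro x
    rcases eq_or_lt_of_le (hQ0 x) with hq | hq
    · rw [← hq]; simpa using hP0 x
    · have hx : 0 < P₁ x := by
        rcases eq_or_lt_of_le (hP0 x) with hx | hx
        · exact absurd (hQa x hx.symm) hq.ne'
        · exact hx
      have hlog : Real.log (P₁ x / Q x) ≤ P₁ x / Q x - 1 :=
        Real.log_le_sub_one_of_pos (div_pos hx hq)
      have heq : -(Q x * Real.log (Q x / P₁ x)) = Q x * Real.log (P₁ x / Q x) := by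
        rw [Real.log_div hq.ne' hx.ne', Real.log_div hx.ne' hq.ne']; ring
      rw [heq]
      calc Q x * Real.log (P₁ x / Q x) ≤ Q x * (P₁ x / Q x - 1) :=
            mul_le_mul_of_nonneg_left hlog hq.le
        _ = P₁ x - Q x := by field_simp
  have h2 : ∑ x : X, -(Q x * Real.log (Q x / P₁ x)) ≤ 0 := by
    calc ∑ x : X, -(Q x * Real.log (Q x / P₁ x)) ≤ ∑ x : X, (P₁ x - Q x) :=
          Finset.sum_le_sum (fun x _ => key x)
      _ = 0 := by rw [Finset.sum_sub_distrib, hP1, hQ1, sub_self]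
  rw [Finset.sum_neg_distrib] at h2
  linarith

lemma stmt_kl_self : ∑ x : X, P₁ x * Real.log (P₁ x / P₁ x) = 0 := by
  apply Finset.sum_eq_zero
  intro x _
  rcases eq_or_lt_of_le (hP0 x) with hx | hx
  · rw [← hx, zero_mul]
  · rw [div_self hx.ne', Real.log_one, mul_zero]

lemma stmtQf_at_zero : stmtQf P₁ 0 = P₁ := by
  have hZ : stmtZf P₁ 0 = 1 := by
    simp only [stmtZf]
    norm_num
    simpa using hP1
  funext x
  simp [stmtQf, hZ]

lemma stmt_hcont (ρ : ℝ) (hρ : 0 < ρ) :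
    ContinuousOn (fun θ => ∑ x : X, -(stmtQf P₁ θ x * Real.log (stmtQf P₁ θ x)))
      (Set.Icc (0:ℝ) ρ) := by
  have hb : ContinuousOn (fun θ : ℝ => 1/(1+θ)) (Set.Icc (0:ℝ) ρ) := by
    apply ContinuousOn.div continuousOn_const (by fun_prop)
    intro θ hθ
    have := hθ.1
    positivity
  have crpow : ∀ x : X, ContinuousOn (fun θ : ℝ => P₁ x ^ (1/(1+θ))) (Set.Icc (0:ℝ) ρ) := by
    intro x
    rcases eq_or_lt_of_le (hP0 x) with hx | hx
    · apply ContinuousOn.congr (continuousOn_const (c := (0:ℝ)))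
      intro θ hθ
      have h1θ : (0:ℝ) < 1 + θ := by have := hθ.1; linarith
      show P₁ x ^ (1/(1+θ)) = 0
      rw [← hx, Real.zero_rpow (one_div_ne_zero h1θ.ne')]
    · apply ContinuousOn.congr
        (f := fun θ : ℝ => Real.exp (Real.log (P₁ x) * (1/(1+θ))))
      · exact Real.continuous_exp.comp_continuousOn (continuousOn_const.mul hb)
      · intro θ hθ
        show P₁ x ^ (1/(1+θ)) = Real.exp (Real.log (P₁ x) * (1/(1+θ)))
        rw [Real.rpow_def_of_pos hx]
  have cZ : ContinuousOn (fun θ => stmtZf P₁ θ) (Set.Icc (0:ℝ) ρ) := by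
    unfold stmtZf
    exact continuousOn_finset_sum _ (fun x _ => crpow x)
  have hZne : ∀ θ ∈ Set.Icc (0:ℝ) ρ, stmtZf P₁ θ ≠ 0 :=
    fun θ _ => (stmtZf_pos hP0 hP1 θ).ne'
  have cQ : ∀ x : X, ContinuousOn (fun θ => stmtQf P₁ θ x) (Set.Icc (0:ℝ) ρ) := by
    intro x
    exact ContinuousOn.div (crpow x) cZ hZne
  apply continuousOn_finset_sum
  intro x _
  rcases eq_or_lt_of_le (hP0 x) with hx | hx
  · apply ContinuousOn.congr (continuousOn_const (c := (0:ℝ)))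
    intro θ hθ
    show -(stmtQf P₁ θ x * Real.log (stmtQf P₁ θ x)) = 0
    rw [stmtQf_zero hP0 hP1 hθ.1 hx.symm]
    simp
  · exact (((cQ x).mul ((cQ x).log
      (fun θ hθ => (stmtQf_pos hP0 hP1 hx).ne'))).neg)

end



/-- For an iid source with marginal `P₁` on finite `X` and `ρ > 0`, `R > 0`,
`min_{θ∈[0,ρ]} { (ρ−θ)R + sup_Q [θ H(Q) − D(Q‖P₁)] }
  = sup_Q { ρ min{H(Q), R} − D(Q‖P₁) }`,
the suprema being over PMFs `Q` on `X` (those not absolutely continuous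
w.r.t. `P₁` have `D(Q‖P₁) = +∞` and do not contribute). -/
theorem stmt19 {X : Type*} [Fintype X] [Nonempty X]
    (P₁ : X → ℝ) (hP0 : ∀ x, 0 ≤ P₁ x) (hP1 : ∑ x : X, P₁ x = 1)
    (ρ R : ℝ) (hρ : 0 < ρ) (hR : 0 < R) :
    sInf {v : ℝ | ∃ θ ∈ Set.Icc (0 : ℝ) ρ,
        v = (ρ - θ) * R +
          sSup {u : ℝ | ∃ Q : X → ℝ, (∀ x, 0 ≤ Q x) ∧ (∑ x : X, Q x = 1) ∧
            (∀ x, P₁ x = 0 → Q x = 0) ∧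
            u = θ * (∑ x : X, -(Q x * Real.log (Q x)))
              - ∑ x : X, Q x * Real.log (Q x / P₁ x)}} =
      sSup {w : ℝ | ∃ Q : X → ℝ, (∀ x, 0 ≤ Q x) ∧ (∑ x : X, Q x = 1) ∧
        (∀ x, P₁ x = 0 → Q x = 0) ∧
        w = ρ * min (∑ x : X, -(Q x * Real.log (Q x))) R
          - ∑ x : X, Q x * Real.log (Q x / P₁ x)} := by
  classical
  -- abbreviations
  set Hf : ℝ → ℝ := fun θ => ∑ x : X, -(stmtQf P₁ θ x * Real.log (stmtQf P₁ θ x)) with hHf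
  set Df : ℝ → ℝ := fun θ => ∑ x : X, stmtQf P₁ θ x * Real.log (stmtQf P₁ θ x / P₁ x) with hDf
  set F : ℝ → ℝ := fun θ => (ρ - θ) * R + (1 + θ) * Real.log (stmtZf P₁ θ) with hF
  set W : Set ℝ := {w : ℝ | ∃ Q : X → ℝ, (∀ x, 0 ≤ Q x) ∧ (∑ x : X, Q x = 1) ∧
        (∀ x, P₁ x = 0 → Q x = 0) ∧
        w = ρ * min (∑ x : X, -(Q x * Real.log (Q x))) R
          - ∑ x : X, Q x * Real.log (Q x / P₁ x)} with hW
  -- the inner sup is attained at the tilted distribution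
  have hsSup : ∀ θ ∈ Set.Icc (0:ℝ) ρ,
      sSup {u : ℝ | ∃ Q : X → ℝ, (∀ x, 0 ≤ Q x) ∧ (∑ x : X, Q x = 1) ∧
            (∀ x, P₁ x = 0 → Q x = 0) ∧
            u = θ * (∑ x : X, -(Q x * Real.log (Q x)))
              - ∑ x : X, Q x * Real.log (Q x / P₁ x)}
        = (1 + θ) * Real.log (stmtZf P₁ θ) := by
    intro θ hθ
    apply IsGreatest.csSup_eq
    constructor
    · exact ⟨stmtQf P₁ θ, stmtQf_nonneg hP0 hP1 θ, stmtQf_sum hP0 hP1 θ,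
        fun x hx => stmtQf_zero hP0 hP1 hθ.1 hx, (stmt_attain hP0 hP1 hθ.1).symm⟩
    · rintro u ⟨Q, hQ0, hQ1, hQa, rfl⟩
      exact stmt_gibbs hP0 hP1 hθ.1 hQ0 hQ1 hQa
  -- rewrite the LHS set as the image of F
  have hVeq : {v : ℝ | ∃ θ ∈ Set.Icc (0 : ℝ) ρ,
        v = (ρ - θ) * R +
          sSup {u : ℝ | ∃ Q : X → ℝ, (∀ x, 0 ≤ Q x) ∧ (∑ x : X, Q x = 1) ∧
            (∀ x, P₁ x = 0 → Q x = 0) ∧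
            u = θ * (∑ x : X, -(Q x * Real.log (Q x)))
              - ∑ x : X, Q x * Real.log (Q x / P₁ x)}} = F '' Set.Icc (0:ℝ) ρ := by
    ext v
    constructor
    · rintro ⟨θ, hθ, rfl⟩
      exact ⟨θ, hθ, by rw [hF]; rw [hsSup θ hθ]⟩
    · rintro ⟨θ, hθ, rfl⟩
      exact ⟨θ, hθ, by rw [hF]; rw [hsSup θ hθ]⟩
  rw [hVeq]
  -- key identity : F θ = (ρ - θ) * R + (θ * Hf θ - Df θ)
  have hFalt : ∀ θ : ℝ, 0 ≤ θ → F θ = (ρ - θ) * R + (θ * Hf θ - Df θ) := by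
    intro θ hθ
    rw [hF, hHf, hDf]
    simp only
    rw [stmt_attain hP0 hP1 hθ]
  -- weak duality
  have hWle : ∀ w ∈ W, ∀ θ ∈ Set.Icc (0:ℝ) ρ, w ≤ F θ := by
    rintro w ⟨Q, hQ0, hQ1, hQa, rfl⟩ θ hθ
    have hg := stmt_gibbs hP0 hP1 hθ.1 hQ0 hQ1 hQa
    have h1 : min (∑ x : X, -(Q x * Real.log (Q x))) R ≤ ∑ x : X, -(Q x * Real.log (Q x)) :=
      min_le_left _ _
    have h2 : min (∑ x : X, -(Q x * Real.log (Q x))) R ≤ R := min_le_right _ _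
    have hθ1 := hθ.1
    have hθ2 := hθ.2
    rw [hF]
    simp only
    nlinarith [hg]
  -- membership of the canonical element (Q = P₁) in W
  have hw₁mem : ρ * min (∑ x : X, -(P₁ x * Real.log (P₁ x))) R ∈ W := by
    refine ⟨P₁, hP0, hP1, fun x hx => hx, ?_⟩
    rw [stmt_kl_self hP0 hP1, sub_zero]
  have hWne : W.Nonempty := ⟨_, hw₁mem⟩
  have hWbdd : BddAbove W := by
    refine ⟨ρ * R, ?_⟩
    rintro w ⟨Q, hQ0, hQ1, hQa, rfl⟩
    have hD := stmt_kl_nonneg hP0 hP1 hQ0 hQ1 hQa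
    have h2 : min (∑ x : X, -(Q x * Real.log (Q x))) R ≤ R := min_le_right _ _
    nlinarith
  have hVne : (F '' Set.Icc (0:ℝ) ρ).Nonempty := ⟨F 0, 0, ⟨le_refl 0, hρ.le⟩, rfl⟩
  have hVbdd : BddBelow (F '' Set.Icc (0:ℝ) ρ) := by
    refine ⟨ρ * min (∑ x : X, -(P₁ x * Real.log (P₁ x))) R, ?_⟩
    rintro v ⟨θ, hθ, rfl⟩
    exact hWle _ hw₁mem θ hθ
  -- easy direction : sSup W ≤ sInf V
  have hle1 : sSup W ≤ sInf (F '' Set.Icc (0:ℝ) ρ) := by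
    apply csSup_le hWne
    intro w hw
    apply le_csInf hVne
    rintro v ⟨θ, hθ, rfl⟩
    exact hWle w hw θ hθ
  -- hard direction
  have hle2 : sInf (F '' Set.Icc (0:ℝ) ρ) ≤ sSup W := by
    have hQ0mem : ∀ θ : ℝ, 0 ≤ θ →
        ρ * min (Hf θ) R - Df θ ∈ W := by
      intro θ hθ
      exact ⟨stmtQf P₁ θ, stmtQf_nonneg hP0 hP1 θ, stmtQf_sum hP0 hP1 θ,
        fun x hx => stmtQf_zero hP0 hP1 hθ hx, rfl⟩
    have hH0 : Hf 0 = ∑ x : X, -(P₁ x * Real.log (P₁ x)) := by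
      rw [hHf]; simp only [stmtQf_at_zero hP0 hP1]
    have hD0 : Df 0 = 0 := by
      rw [hDf]; simp only [stmtQf_at_zero hP0 hP1]; exact stmt_kl_self hP0 hP1
    rcases le_or_gt R (Hf 0) with hc1 | hc1
    · -- case 1 : θ* = 0
      have hF0 : F 0 = ρ * R := by
        rw [hFalt 0 le_rfl, hD0]; ring
      have : ρ * R ∈ W := by
        have := hQ0mem 0 le_rfl
        rwa [hD0, sub_zero, min_eq_right hc1] at this
      calc sInf (F '' Set.Icc (0:ℝ) ρ) ≤ F 0 :=
            csInf_le hVbdd ⟨0, ⟨le_refl 0, hρ.le⟩, rfl⟩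
        _ = ρ * R := hF0
        _ ≤ sSup W := le_csSup hWbdd this
    · rcases le_or_gt (Hf ρ) R with hc2 | hc2
      · -- case 2 : θ* = ρ
        have hFρ : F ρ = ρ * Hf ρ - Df ρ := by
          rw [hFalt ρ hρ.le]; ring
        have : ρ * Hf ρ - Df ρ ∈ W := by
          have := hQ0mem ρ hρ.le
          rwa [min_eq_left hc2] at this
        calc sInf (F '' Set.Icc (0:ℝ) ρ) ≤ F ρ :=
              csInf_le hVbdd ⟨ρ, ⟨hρ.le, le_refl ρ⟩, rfl⟩
          _ = ρ * Hf ρ - Df ρ := hFρ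
          _ ≤ sSup W := le_csSup hWbdd this
      · -- case 3 : intermediate value
        have hcont := stmt_hcont hP0 hP1 ρ hρ
        have hmem : R ∈ Set.Icc (Hf 0) (Hf ρ) := ⟨hc1.le, hc2.le⟩
        obtain ⟨θs, hθs, hθsval⟩ := intermediate_value_Icc hρ.le hcont hmem
        have hθsval' : Hf θs = R := hθsval
        have hFθs : F θs = ρ * R - Df θs := by
          rw [hFalt θs hθs.1, hθsval']; ring
        have : ρ * R - Df θs ∈ W := by
          have := hQ0mem θs hθs.1
          rwa [hθsval', min_self] at this
        calc sInf (F '' Set.Icc (0:ℝ) ρ) ≤ F θs := csInf_le hVbdd ⟨θs, hθs, rfl⟩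
          _ = ρ * R - Df θs := hFθs
          _ ≤ sSup W := le_csSup hWbdd this
  linarith
end
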